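/- Every graph G with minimum degree δ contains a matching of size at least min(δ, ⌊|V(G)|/2⌋). -/

import Mathlib

open SimpleGraph Finset

namespace MatchAux

variable {V : Type*} [Fintype V] [DecidableEq V]

/-- endpoints of an edge as a finset -/
def ends (e : Sym2 V) : Finset V := Finset.univ.filter (· ∈ e)

lemma mem_ends {x : V} {e : Sym2 V} : x ∈ ends e ↔ x ∈ e := by simp [ends]

lemma ends_pair {x y : V} : ends s(x, y) = {x, y} := by
  ext z; simp [mem_ends, Sym2.mem_iff]

lemma card_ends {e : Sym2 V} (h : ¬ e.IsDiag) : (ends e).card = 2 := by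
  induction e using Sym2.ind with
  | _ x y =>
    rw [ends_pair]
    rw [Sym2.mk_isDiag_iff] at h
    exact Finset.card_pair h

lemma card_filter_pair {x y : V} (hxy : x ≠ y) (p : V → Prop) [DecidablePred p] :
    (({x, y} : Finset V).filter p).card =
      (if p x then 1 else 0) + (if p y then 1 else 0) := by
  rw [Finset.filter_insert, Finset.filter_singleton]
  split_ifs <;> simp_all [Finset.card_insert_of_notMem]

set_option linter.unusedSectionVars false

variable (G : SimpleGraph V) [DecidableRel G.Adj]

/-- `s` is a matching in `G`. -/
def IsM (s : Finset (Sym2 V)) : Prop :=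
  (∀ e ∈ s, e ∈ G.edgeSet) ∧
  ∀ e ∈ s, ∀ f ∈ s, e ≠ f → Disjoint (ends e) (ends f)

/-- vertices covered by the matching -/
def cov (s : Finset (Sym2 V)) : Finset V := s.biUnion ends

variable {G}

lemma card_cov {s : Finset (Sym2 V)} (hs : IsM G s) : (cov s).card = 2 * s.card := by
  rw [cov, Finset.card_biUnion (fun e he f hf hef => hs.2 e he f hf hef)]
  rw [Finset.sum_congr rfl
    (fun e he => card_ends (G.not_isDiag_of_mem_edgeSet (hs.1 e he)))]
  simp [mul_comm]

lemma pair_disjoint {a b c d : V} (h1 : a ≠ c) (h2 : a ≠ d) (h3 : b ≠ c) (h4 : b ≠ d) :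
    Disjoint ({a, b} : Finset V) {c, d} := by
  rw [Finset.disjoint_left]
  intro z hz hz'
  simp only [Finset.mem_insert, Finset.mem_singleton] at hz hz'
  rcases hz with rfl | rfl <;> rcases hz' with rfl | rfl <;> simp_all

/-- extend a matching by an edge between two uncovered vertices -/
lemma extend {s : Finset (Sym2 V)} (hs : IsM G s) {a b : V} (hadj : G.Adj a b)
    (ha : a ∉ cov s) (hb : b ∉ cov s) :
    IsM G (insert s(a, b) s) ∧ (insert s(a, b) s).card = s.card + 1 := by
  have hnotmem : s(a, b) ∉ s := by
    intro h
    exact ha (Finset.mem_biUnion.mpr ⟨_, h, mem_ends.mpr (Sym2.mem_mk_left a b)⟩)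
  have key : ∀ f ∈ s, Disjoint (ends s(a, b)) (ends f) := by
    intro f hf
    rw [Finset.disjoint_left]
    intro z hz
    rw [ends_pair, Finset.mem_insert, Finset.mem_singleton] at hz
    rcases hz with rfl | rfl
    · exact fun hz' => ha (Finset.mem_biUnion.mpr ⟨f, hf, hz'⟩)
    · exact fun hz' => hb (Finset.mem_biUnion.mpr ⟨f, hf, hz'⟩)
  refine ⟨⟨?_, ?_⟩, ?_⟩
  · intro e he
    rcases Finset.mem_insert.mp he with rfl | he
    · exact hadj
    · exact hs.1 e he
  · intro e he f hf hef
    rcases Finset.mem_insert.mp he with rfl | he <;>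
      rcases Finset.mem_insert.mp hf with rfl | hf
    · exact absurd rfl hef
    · exact key f hf
    · exact (key e he).symm
    · exact hs.2 e he f hf hef
  · exact Finset.card_insert_of_notMem hnotmem

/-- augmenting step: replace edge `s(x,y)` by `s(u,x)` and `s(v,y)` -/
lemma augment {s : Finset (Sym2 V)} (hs : IsM G s) {u v x y : V}
    (hxy : s(x, y) ∈ s) (hu : u ∉ cov s) (hv : v ∉ cov s) (huv : u ≠ v)
    (hux : G.Adj u x) (hvy : G.Adj v y) :
    ∃ t : Finset (Sym2 V), IsM G t ∧ t.card = s.card + 1 := by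
  have hxney : x ≠ y := by
    have := G.not_isDiag_of_mem_edgeSet (hs.1 _ hxy)
    rwa [Sym2.mk_isDiag_iff] at this
  have hxcov : x ∈ cov s :=
    Finset.mem_biUnion.mpr ⟨_, hxy, mem_ends.mpr (Sym2.mem_mk_left x y)⟩
  have hycov : y ∈ cov s :=
    Finset.mem_biUnion.mpr ⟨_, hxy, mem_ends.mpr (Sym2.mem_mk_right x y)⟩
  have hux' : u ≠ x := fun h => hu (h ▸ hxcov)
  have huy : u ≠ y := fun h => hu (h ▸ hycov)
  have hvx : v ≠ x := fun h => hv (h ▸ hxcov)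
  have hvy' : v ≠ y := fun h => hv (h ▸ hycov)
  have key1 : ∀ f ∈ s.erase s(x, y), Disjoint (ends s(u, x)) (ends f) := by
    intro f hf
    obtain ⟨hfne, hfs⟩ := Finset.mem_erase.mp hf
    have hdisj := hs.2 _ hxy f hfs (Ne.symm hfne)
    rw [Finset.disjoint_left]
    intro z hz hz'
    rw [ends_pair, Finset.mem_insert, Finset.mem_singleton] at hz
    rcases hz with rfl | h2
    · exact hu (Finset.mem_biUnion.mpr ⟨f, hfs, hz'⟩)
    · rw [h2] at hz'
      exact (Finset.disjoint_left.mp hdisj (mem_ends.mpr (Sym2.mem_mk_left x y))) hz'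
  have key2 : ∀ f ∈ s.erase s(x, y), Disjoint (ends s(v, y)) (ends f) := by
    intro f hf
    obtain ⟨hfne, hfs⟩ := Finset.mem_erase.mp hf
    have hdisj := hs.2 _ hxy f hfs (Ne.symm hfne)
    rw [Finset.disjoint_left]
    intro z hz hz'
    rw [ends_pair, Finset.mem_insert, Finset.mem_singleton] at hz
    rcases hz with rfl | h2
    · exact hv (Finset.mem_biUnion.mpr ⟨f, hfs, hz'⟩)
    · rw [h2] at hz'
      exact (Finset.disjoint_left.mp hdisj (mem_ends.mpr (Sym2.mem_mk_right x y))) hz'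
  refine ⟨insert s(u, x) (insert s(v, y) (s.erase s(x, y))), ⟨?_, ?_⟩, ?_⟩
  · intro e he
    simp only [Finset.mem_insert] at he
    rcases he with rfl | rfl | he
    · exact hux
    · exact hvy
    · exact hs.1 e (Finset.mem_of_mem_erase he)
  · intro e he f hf hef
    simp only [Finset.mem_insert] at he hf
    have duxvy : Disjoint (ends s(u, x)) (ends s(v, y)) := by
      rw [ends_pair, ends_pair]
      exact pair_disjoint huv huy hvx.symm hxney
    rcases he with rfl | rfl | he <;> rcases hf with rfl | rfl | hf
    · exact absurd rfl hef
    · exact duxvy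
    · exact key1 f hf
    · exact duxvy.symm
    · exact absurd rfl hef
    · exact key2 f hf
    · exact (key1 e he).symm
    · exact (key2 e he).symm
    · exact hs.2 e (Finset.mem_of_mem_erase he) f (Finset.mem_of_mem_erase hf) hef
  · have h1 : s(v, y) ∉ s.erase s(x, y) := fun h =>
      hv (Finset.mem_biUnion.mpr
        ⟨_, Finset.mem_of_mem_erase h, mem_ends.mpr (Sym2.mem_mk_left v y)⟩)
    have h2 : s(u, x) ∉ insert s(v, y) (s.erase s(x, y)) := by
      simp only [Finset.mem_insert]
      rintro (h | h)
      · have hmem : u = v ∨ u = y := by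
          have hm := Sym2.mem_mk_left u x
          rw [h, Sym2.mem_iff] at hm
          exact hm
        rcases hmem with rfl | rfl
        · exact huv rfl
        · exact huy rfl
      · exact hu (Finset.mem_biUnion.mpr
          ⟨_, Finset.mem_of_mem_erase h, mem_ends.mpr (Sym2.mem_mk_left u x)⟩)
    rw [Finset.card_insert_of_notMem h2, Finset.card_insert_of_notMem h1,
        Finset.card_erase_of_mem hxy]
    have : 1 ≤ s.card := Finset.card_pos.mpr ⟨_, hxy⟩
    omega

lemma exists_isM (G : SimpleGraph V) [DecidableRel G.Adj] (δ : ℕ)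
    (hδ : ∀ v : V, δ ≤ G.degree v) :
    ∃ s : Finset (Sym2 V), IsM G s ∧ min δ (Fintype.card V / 2) ≤ s.card := by
  classical
  obtain ⟨s, hsmem, hmax⟩ :=
    Finset.exists_max_image (Finset.univ.filter (fun t => IsM G t)) Finset.card
      ⟨∅, Finset.mem_filter.mpr ⟨Finset.mem_univ _, ⟨by simp, by simp⟩⟩⟩
  rw [Finset.mem_filter] at hsmem
  have hs : IsM G s := hsmem.2
  have hmax' : ∀ t, IsM G t → t.card ≤ s.card := fun t ht =>
    hmax t (Finset.mem_filter.mpr ⟨Finset.mem_univ _, ht⟩)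
  refine ⟨s, hs, ?_⟩
  by_contra hlt
  push_neg at hlt
  rw [lt_min_iff] at hlt
  obtain ⟨hδs, hns⟩ := hlt
  have hcovcard : (cov s).card = 2 * s.card := card_cov hs
  have hcovle : (cov s).card ≤ Fintype.card V := Finset.card_le_univ _
  have hcompl : 1 < ((cov s)ᶜ : Finset V).card := by
    rw [Finset.card_compl, hcovcard]
    omega
  obtain ⟨u, hu', v, hv', huv⟩ := Finset.one_lt_card.mp hcompl
  rw [Finset.mem_compl] at hu' hv'
  have huncov : ∀ w a : V, a ∉ cov s → G.Adj a w → w ∈ cov s := by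
    intro w a ha hadj
    by_contra hw
    obtain ⟨hM, hc⟩ := extend hs hadj ha hw
    have := hmax' _ hM
    omega
  have hNu : G.neighborFinset u ⊆ cov s := fun w hw =>
    huncov w u hu' ((G.mem_neighborFinset u w).mp hw)
  have hNv : G.neighborFinset v ⊆ cov s := fun w hw =>
    huncov w v hv' ((G.mem_neighborFinset v w).mp hw)
  have hdeg : ∀ a : V, G.neighborFinset a ⊆ cov s →
      G.degree a = ∑ e ∈ s, (G.neighborFinset a ∩ ends e).card := by
    intro a hNa
    have heq : G.neighborFinset a = s.biUnion (fun e => G.neighborFinset a ∩ ends e) := by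
      ext z
      simp only [Finset.mem_biUnion, Finset.mem_inter]
      constructor
      · intro hz
        obtain ⟨e, he, hze⟩ := Finset.mem_biUnion.mp (hNa hz)
        exact ⟨e, he, hz, hze⟩
      · rintro ⟨e, he, hz, _⟩
        exact hz
    calc G.degree a = (G.neighborFinset a).card :=
          (G.card_neighborFinset_eq_degree a).symm
      _ = (s.biUnion fun e => G.neighborFinset a ∩ ends e).card := congrArg Finset.card heq
      _ = ∑ e ∈ s, (G.neighborFinset a ∩ ends e).card :=
          Finset.card_biUnion fun e he f hf hef =>
            (hs.2 e he f hf hef).mono Finset.inter_subset_right Finset.inter_subset_right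
  have hsum : 2 * s.card <
      ∑ e ∈ s, ((G.neighborFinset u ∩ ends e).card + (G.neighborFinset v ∩ ends e).card) := by
    rw [Finset.sum_add_distrib, ← hdeg u hNu, ← hdeg v hNv]
    have h1 := hδ u
    have h2 := hδ v
    omega
  have hedge : ∃ e ∈ s,
      3 ≤ (G.neighborFinset u ∩ ends e).card + (G.neighborFinset v ∩ ends e).card := by
    by_contra hc
    push_neg at hc
    have hle := Finset.sum_le_card_nsmul s
      (fun e => (G.neighborFinset u ∩ ends e).card + (G.neighborFinset v ∩ ends e).card) 2
      (fun e he => by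
        show (G.neighborFinset u ∩ ends e).card + (G.neighborFinset v ∩ ends e).card ≤ 2
        have := hc e he; omega)
    simp only [smul_eq_mul] at hle
    omega
  obtain ⟨e, he, h3⟩ := hedge
  obtain ⟨x, y, rfl⟩ : ∃ x y, e = s(x, y) := Sym2.ind (fun x y => ⟨x, y, rfl⟩) e
  have hxney : x ≠ y := by
    have := G.not_isDiag_of_mem_edgeSet (hs.1 _ he)
    rwa [Sym2.mk_isDiag_iff] at this
  have hinter : ∀ a : V, G.neighborFinset a ∩ ends s(x, y) =
      ({x, y} : Finset V).filter (fun z => G.Adj a z) := by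
    intro a
    ext z
    simp [ends_pair, SimpleGraph.mem_neighborFinset, Finset.mem_filter, and_comm]
  rw [hinter, hinter, card_filter_pair hxney, card_filter_pair hxney] at h3
  have hkey : (G.Adj u x ∧ G.Adj v y) ∨ (G.Adj u y ∧ G.Adj v x) := by
    rcases Classical.em (G.Adj u x) with a | a <;>
    rcases Classical.em (G.Adj u y) with b | b <;>
    rcases Classical.em (G.Adj v x) with c | c <;>
    rcases Classical.em (G.Adj v y) with d | d <;>
      simp only [a, b, c, d, if_true, if_false] at h3 ⊢ <;>
      first | omega | tauto
  rcases hkey with ⟨h1, h2⟩ | ⟨h1, h2⟩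
  · obtain ⟨t, ht, htc⟩ := augment hs he hu' hv' huv h1 h2
    have := hmax' t ht
    omega
  · have he' : s(y, x) ∈ s := by rwa [Sym2.eq_swap]
    obtain ⟨t, ht, htc⟩ := augment hs he' hu' hv' huv h1 h2
    have := hmax' t ht
    omega

lemma toSubgraph {G : SimpleGraph V} [DecidableRel G.Adj] {s : Finset (Sym2 V)}
    (hs : IsM G s) :
    ∃ M : G.Subgraph, M.IsMatching ∧ M.edgeSet = (s : Set (Sym2 V)) := by
  refine ⟨⟨{v | v ∈ cov s}, fun v w => s(v, w) ∈ s, ?_, ?_, ?_⟩, ?_, ?_⟩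
  · intro v w h
    exact (SimpleGraph.mem_edgeSet G).mp (hs.1 _ h)
  · intro v w h
    exact Finset.mem_biUnion.mpr ⟨_, h, mem_ends.mpr (Sym2.mem_mk_left v w)⟩
  · constructor
    intro v w h
    rwa [Sym2.eq_swap]
  · intro v hv
    obtain ⟨e, he, hve⟩ := Finset.mem_biUnion.mp hv
    rw [mem_ends] at hve
    refine ⟨Sym2.Mem.other' hve, ?_, ?_⟩
    · show s(v, Sym2.Mem.other' hve) ∈ s
      rwa [Sym2.other_spec' hve]
    · intro w' hw'
      have hw'' : s(v, w') ∈ s := hw'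
      have heq : s(v, w') = e := by
        by_contra hne
        have hdisj := hs.2 _ hw'' _ he hne
        exact (Finset.disjoint_left.mp hdisj
          (mem_ends.mpr (Sym2.mem_mk_left v w'))) (mem_ends.mpr hve)
      rw [← Sym2.other_spec' hve] at heq
      exact Sym2.congr_right.mp heq
  · ext e
    induction e using Sym2.ind with
    | _ x y => simp [SimpleGraph.Subgraph.mem_edgeSet]

end MatchAux

open SimpleGraph

/-- Every graph with minimum degree `δ` contains a matching
of size at least `min δ ⌊|V(G)|/2⌋`. -/
theorem matching_of_minDegree {V : Type*} [Fintype V] [DecidableEq V]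
    (G : SimpleGraph V) [DecidableRel G.Adj] (δ : ℕ)
    (hδ : ∀ v : V, δ ≤ G.degree v) :
    ∃ M : G.Subgraph, M.IsMatching ∧
      min δ (Fintype.card V / 2) ≤ M.edgeSet.ncard := by
  obtain ⟨s, hs, hcard⟩ := MatchAux.exists_isM G δ hδ
  obtain ⟨M, hM, hMe⟩ := MatchAux.toSubgraph hs
  refine ⟨M, hM, ?_⟩
  rwa [hMe, Set.ncard_coe_finset]
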